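/- For all integers r ≥ 1 and t ≥ 1, 2^{r} + 2^{t} - 2 ≥ (r!·t!/(r+t-1)!) · 2^{r+t-1}. -/

import Mathlib

lemma nat_key (a b : ℕ) (ha : a ≤ b + 1) : (b + 2 - a) * 2 ^ (a + 1) ≤ 2 ^ (b + 2) := by
  calc (b + 2 - a) * 2 ^ (a + 1) ≤ 2 ^ (b + 1 - a) * 2 ^ (a + 1) := by
        have := Nat.lt_two_pow_self (n := b + 1 - a)
        exact Nat.mul_le_mul_right _ (by omega)
    _ = 2 ^ (b + 2) := by rw [← pow_add]; congr 1; omega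

lemma aux_ineq (a b : ℕ) :
    (((a+1).factorial * (b+1).factorial : ℕ) : ℝ) / (((a+b+1).factorial : ℕ) : ℝ) * 2 ^ (a+b+1) ≤
      (2 : ℝ) ^ (a+1) + (2 : ℝ) ^ (b+1) - 2 := by
  induction b with
  | zero =>
      have h : (((a+1).factorial : ℕ) : ℝ) ≠ 0 := by
        exact_mod_cast (a+1).factorial_ne_zero
      simp only [show (0:ℕ)+1 = 1 from rfl, Nat.factorial_one, mul_one, Nat.add_zero]
      rw [div_self h]
      norm_num
  | succ b ih =>
      set X : ℝ := (((a+1).factorial * (b+1).factorial : ℕ) : ℝ) / (((a+b+1).factorial : ℕ) : ℝ) * 2 ^ (a+b+1) with hXdef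
      have hX0 : 0 ≤ X := by positivity
      have hfac : (((a+b+1).factorial : ℕ) : ℝ) ≠ 0 := by
        exact_mod_cast (a+b+1).factorial_ne_zero
      have habpos : (0:ℝ) < (a:ℝ) + b + 2 := by positivity
      have hexp : (((a+1).factorial * (b+1+1).factorial : ℕ) : ℝ) /
          (((a+(b+1)+1).factorial : ℕ) : ℝ) * 2 ^ (a+(b+1)+1)
          = X * (2 * ((b:ℝ)+2) / ((a:ℝ)+b+2)) := by
        have e1 : (b+1+1).factorial = (b+2) * (b+1).factorial := Nat.factorial_succ (b+1)
        have e2 : (a+(b+1)+1).factorial = (a+b+2) * (a+b+1).factorial := by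
          rw [show a+(b+1)+1 = (a+b+1)+1 by ring, Nat.factorial_succ]
        rw [e1, e2, hXdef]
        push_cast
        rw [show a+(b+1)+1 = (a+b+1)+1 by ring, pow_succ]
        field_simp
      rw [hexp]
      by_cases hab : b + 2 ≤ a
      · have h1 : 2 * ((b:ℝ)+2) / ((a:ℝ)+b+2) ≤ 1 := by
          rw [div_le_one habpos]
          have : (b:ℝ) + 2 ≤ (a:ℝ) := by exact_mod_cast hab
          linarith
        have h2 : X * (2 * ((b:ℝ)+2) / ((a:ℝ)+b+2)) ≤ X :=
          (mul_le_of_le_one_right hX0 h1)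
        have h3 : (2:ℝ) ^ (b+1) ≤ 2 ^ (b+1+1) := by
          apply pow_le_pow_right₀ (by norm_num) (by omega)
        linarith
      · push_neg at hab
        have ha' : a ≤ b + 1 := by omega
        have hnat := nat_key a b ha'
        have h1 : ((b:ℝ) + 2 - a) * 2 ^ (a+1) ≤ 2 ^ (b+2) := by
          have : (((b + 2 - a : ℕ)) : ℝ) * 2 ^ (a+1) ≤ ((2 ^ (b+2) : ℕ) : ℝ) := by
            exact_mod_cast Nat.mul_le_mul_right _ (le_refl (b+2-a)) |>.trans hnat
          rw [Nat.cast_sub (by omega)] at this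
          push_cast at this ⊢
          linarith
        set M : ℝ := (2:ℝ) ^ (a+1) + 2 ^ (b+1) - 2 with hMdef
        have hM0 : 0 < M := by
          have : (2:ℝ) ≤ 2 ^ (a+1) := by
            calc (2:ℝ) = 2^1 := by norm_num
            _ ≤ 2^(a+1) := pow_le_pow_right₀ (by norm_num) (by omega)
          have hb : (0:ℝ) < 2 ^ (b+1) := by positivity
          simp only [hMdef]; linarith
        have hkey : M * ((b:ℝ) + 2 - a) ≤ 2 ^ (b+1) * ((a:ℝ) + b + 2) := by
          rcases Nat.eq_zero_or_pos a with h0 | hapos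
          · subst h0
            simp only [hMdef]
            push_cast
            ring_nf
            nlinarith [pow_pos (show (0:ℝ) < 2 by norm_num) (b+1)]
          · have ha1 : (1:ℝ) ≤ (a:ℝ) := by exact_mod_cast hapos
            have hs1 : (1:ℝ) ≤ (b:ℝ) + 2 - a := by
              have : (a:ℝ) ≤ (b:ℝ) + 1 := by exact_mod_cast ha'
              linarith
            have hpow : (2:ℝ) ^ (b+2) = 2 * 2 ^ (b+1) := by ring
            have hb : (0:ℝ) < 2 ^ (b+1) := by positivity
            simp only [hMdef]
            nlinarith [h1, mul_le_mul_of_nonneg_right ha1 (le_of_lt hb)]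
        have hXM : X ≤ M := ih
        have hsplit : X * (2 * ((b:ℝ)+2) / ((a:ℝ)+b+2))
            = X + X * (((b:ℝ)+2-a) / ((a:ℝ)+b+2)) := by
          field_simp
          ring
        rw [hsplit]
        have hs0 : (0:ℝ) ≤ ((b:ℝ)+2-a) / ((a:ℝ)+b+2) := by
          apply div_nonneg _ (le_of_lt habpos)
          have : (a:ℝ) ≤ (b:ℝ) + 1 := by exact_mod_cast ha'
          linarith
        have h4 : X * (((b:ℝ)+2-a) / ((a:ℝ)+b+2)) ≤ M * (((b:ℝ)+2-a) / ((a:ℝ)+b+2)) :=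
          mul_le_mul_of_nonneg_right hXM hs0
        have h5 : M * (((b:ℝ)+2-a) / ((a:ℝ)+b+2)) ≤ 2 ^ (b+1) := by
          rw [← mul_div_assoc, div_le_iff₀ habpos]
          exact hkey
        have h6 : (2:ℝ) ^ (b+1+1) = 2 ^ (b+1) + 2 ^ (b+1) := by ring
        simp only [hMdef] at hXM h4 h5
        linarith

/-- For all integers `r ≥ 1` and `t ≥ 1`,
`2^r + 2^t - 2 ≥ (r! t!/(r+t-1)!) · 2^{r+t-1}`. -/
theorem two_pow_ineq (r t : ℕ) (hr : 1 ≤ r) (ht : 1 ≤ t) :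
    ((r.factorial * t.factorial : ℕ) : ℝ) / ((r + t - 1).factorial : ℝ) * 2 ^ (r + t - 1) ≤
      (2 : ℝ) ^ r + (2 : ℝ) ^ t - 2 := by
  obtain ⟨a, rfl⟩ : ∃ a, r = a + 1 := ⟨r - 1, by omega⟩
  obtain ⟨b, rfl⟩ : ∃ b, t = b + 1 := ⟨t - 1, by omega⟩
  have h : (a + 1) + (b + 1) - 1 = a + b + 1 := by omega
  rw [h]
  exact aux_ineq a b
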